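/- Fix an integer n ≥ 2. If (C,b) ∈ V satisfies λ_0(C,b) ≥ 0, λ_F(C,b) ≥ 0, and λ_x(C,b) ≥ 0 for all x ∈ 𝓔, then (C,b) lies in the convex cone spanned by 𝒩 × {0} and the single element ((n−1)F, −1/2); that is, there exist C' ∈ 𝒩 and a real number t ≥ 0 with (C,b) = (C',0) + t·((n−1)F, −1/2). -/
import Mathlib


/-- The Picard lattice `L = ℤ^10` of a rational elliptic surface,
with basis `H, E_1, …, E_9` (index `0` is `H`, index `i+1` is `E_{i+1}`). -/
abbrev L : Type := Fin 10 → ℤ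

/-- The hyperplane class `H`. -/
def Hcl : L := fun j => if j = 0 then 1 else 0

/-- The exceptional classes `E_1, …, E_9` (indexed by `Fin 9`). -/
def Ecl (i : Fin 9) : L := fun j => if j = i.succ then 1 else 0

/-- The intersection form: `⟨H,H⟩ = 1`, `⟨E_i,E_i⟩ = -1`, with `H, E_1, …, E_9`
pairwise orthogonal. -/
def form (x y : L) : ℤ := x 0 * y 0 - ∑ i : Fin 9, x i.succ * y i.succ

/-- The fiber class `F = 3H - E_1 - ⋯ - E_9 = -K_X`. -/
def Fcl : L := (3 : ℤ) • Hcl - ∑ i : Fin 9, Ecl i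

/-- The real Néron–Severi space `L ⊗ ℝ = ℝ^10`. -/
abbrev LR : Type := Fin 10 → ℝ

/-- The natural inclusion `L → L ⊗ ℝ`. -/
def toR (x : L) : LR := fun j => (x j : ℝ)

/-- The intersection form extended to `L ⊗ ℝ`. -/
def formR (x y : LR) : ℝ := x 0 * y 0 - ∑ i : Fin 9, x i.succ * y i.succ

/-- The set `𝓔` of classes of `(-1)`-curves:
`x ∈ L` with `⟨x,x⟩ = -1` and `⟨x,F⟩ = 1`. -/
def negCurves : Set L := {x | form x x = -1 ∧ form x Fcl = 1}

/-- The nef cone `𝒩 ⊆ L ⊗ ℝ`: classes meeting `F` and every `(-1)`-curve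
nonnegatively. -/
def nefCone : Set LR :=
  {D | 0 ≤ formR D (toR Fcl) ∧ ∀ x ∈ negCurves, 0 ≤ formR D (toR x)}

lemma formR_sub_smul (C y z : LR) (s : ℝ) :
    formR (C - s • y) z = formR C z - s * formR y z := by
  simp only [formR, Pi.sub_apply, Pi.smul_apply, smul_eq_mul, sub_mul,
    Finset.sum_sub_distrib]
  rw [mul_sub, Finset.mul_sum]
  ring_nf

lemma formR_toR (x y : L) : formR (toR x) (toR y) = (form x y : ℝ) := by
  simp [formR, form, toR]

lemma form_symm (x y : L) : form x y = form y x := by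
  simp [form, mul_comm]

lemma form_F_F : form Fcl Fcl = 0 := by decide

/-- Fix `n ≥ 2`. A class `(C, b)` in the Néron–Severi space of
`X^[n]` (corresponding to `C^[n] + bB`) which meets `C_0`, `F_[n]`, and `x_[n]`
for all `x ∈ 𝓔` nonnegatively lies in the convex cone spanned by `𝒩 × {0}`
and `((n-1)F, -1/2)`. -/
theorem bounding_cone_decomposition (n : ℤ) (hn : 2 ≤ n) (C : LR) (b : ℝ)
    (h0 : 0 ≤ -2 * b)
    (hF : 0 ≤ formR C (toR Fcl) + 2 * (n : ℝ) * b)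
    (hE : ∀ x ∈ negCurves, 0 ≤ formR C (toR x) + (2 * (n : ℝ) - 2) * b) :
    ∃ C' ∈ nefCone, ∃ t : ℝ, 0 ≤ t ∧
      C = C' + t • (((n : ℝ) - 1) • toR Fcl) ∧ b = t * (-(1 / 2)) := by
  refine ⟨C - (-2*b) • (((n:ℝ)-1) • toR Fcl), ?_, -2*b, h0, by abel, by ring⟩
  have hsm : (-2*b) • (((n:ℝ)-1) • toR Fcl) = ((-2*b)*((n:ℝ)-1)) • toR Fcl := by
    rw [smul_smul]
  rw [hsm]
  have hn' : (2:ℝ) ≤ (n:ℝ) := by exact_mod_cast hn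
  constructor
  · rw [formR_sub_smul, formR_toR, form_F_F]
    push_cast
    nlinarith [mul_nonneg h0 (by linarith : (0:ℝ) ≤ (n:ℝ))]
  · intro x hx
    rw [formR_sub_smul, formR_toR, form_symm, hx.2]
    have := hE x hx
    push_cast
    nlinarith [this]
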